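/- Let B ⊆ F_q be a maximal set (with respect to inclusion) such that B - B ⊆ Q ∪ {0}, and let φ(t) = Σ_{b∈B} χ(b - t). Then for every t ∉ B one has φ(t) ≤ |B| - 2. -/
import Mathlib


open scoped Classical

/-- The quadratic character: 0 at 0, 1 on nonzero squares, -1 on non-squares. -/
noncomputable def quadChar {F : Type*} [Field F] (x : F) : ℤ :=
  if x = 0 then 0 else if IsSquare x then 1 else -1

theorem stmt_5 {F : Type*} [Field F] [Fintype F]
    (hq : Fintype.card F % 4 = 1) (B : Finset F)
    (hB : ∀ b₁ ∈ B, ∀ b₂ ∈ B, b₁ ≠ b₂ → b₁ - b₂ ≠ 0 ∧ IsSquare (b₁ - b₂))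
    (hmax : ∀ C : Finset F,
      (∀ c₁ ∈ C, ∀ c₂ ∈ C, c₁ ≠ c₂ → c₁ - c₂ ≠ 0 ∧ IsSquare (c₁ - c₂)) →
      B ⊆ C → C = B)
    (t : F) (ht : t ∉ B) :
    ∑ b ∈ B, quadChar (b - t) ≤ (B.card : ℤ) - 2 := by
  have hne : ∀ b ∈ B, b - t ≠ 0 := fun b hb => sub_ne_zero.mpr (fun h => ht (h ▸ hb))
  by_cases hall : ∀ b ∈ B, IsSquare (b - t)
  · -- then insert t B would contradict maximality
    exfalso
    have hneg1 : IsSquare (-1 : F) := by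
      rw [FiniteField.isSquare_neg_one_iff]
      omega
    have hC : ∀ c₁ ∈ insert t B, ∀ c₂ ∈ insert t B, c₁ ≠ c₂ →
        c₁ - c₂ ≠ 0 ∧ IsSquare (c₁ - c₂) := by
      intro c₁ h₁ c₂ h₂ hne12
      refine ⟨sub_ne_zero.mpr hne12, ?_⟩
      simp only [Finset.mem_insert] at h₁ h₂
      rcases h₁ with rfl | h₁
      · rcases h₂ with rfl | h₂
        · exact absurd rfl hne12
        · have : IsSquare (-1 * (c₂ - c₁)) := hneg1.mul (hall c₂ h₂)
          simpa using this
      · rcases h₂ with rfl | h₂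
        · exact hall c₁ h₁
        · exact (hB c₁ h₁ c₂ h₂ hne12).2
    have := hmax (insert t B) hC (Finset.subset_insert _ _)
    exact ht (this ▸ Finset.mem_insert_self t B)
  · push_neg at hall
    obtain ⟨b₀, hb₀, hns⟩ := hall
    have hval : quadChar (b₀ - t) = -1 := by
      simp [quadChar, hne b₀ hb₀, hns]
    have hsum : ∑ b ∈ B.erase b₀, quadChar (b - t) + quadChar (b₀ - t)
        = ∑ b ∈ B, quadChar (b - t) := Finset.sum_erase_add _ _ hb₀
    have hbound : ∑ b ∈ B.erase b₀, quadChar (b - t) ≤ ((B.erase b₀).card : ℤ) := by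
      calc ∑ b ∈ B.erase b₀, quadChar (b - t) ≤ ∑ _b ∈ B.erase b₀, (1 : ℤ) := by
            apply Finset.sum_le_sum
            intro i _
            unfold quadChar
            split <;> [norm_num; skip]
            split <;> norm_num
        _ = ((B.erase b₀).card : ℤ) := by simp
    have hcard : ((B.erase b₀).card : ℤ) = (B.card : ℤ) - 1 := by
      rw [Finset.card_erase_of_mem hb₀]
      have : 1 ≤ B.card := Finset.card_pos.mpr ⟨b₀, hb₀⟩
      push_cast [Nat.cast_sub this]
      ring
    omega
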